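/- Let Q^P be the quiver with vertex set ℕ × {0,…,n} and arrows: for each r ∈ ℕ and 0 ≤ i ≤ g−1, an arrow (r, i+1) → (r, i) and an arrow (r, i) → (r+1, i+1); for each r ∈ ℕ and g ≤ i ≤ n, an arrow (r, i) → (r, i+1 mod (n+1)) and an arrow (r, i+1 mod (n+1)) → (r+1, i). Then the assignment F(τ^{−r}β_i) = (r, i) is a well-defined bijection from the set of preprojective arcs of P_{g,h} onto ℕ × {0,…,n}, and for any two preprojective arcs α, α′ the elementary moves from α to α′ are in bijection with the arrows from F(α) to F(α′) in Q^P; that is, F is an isomorphism from the quiver of preprojective arcs with elementary moves onto Q^P. -/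

import Mathlib

/-- Shift the first entry of every point of `A` by `d` (well defined on arcs, since it
commutes with the deck transformations). -/
def shiftFst (d : ℤ) (A : Set (ℤ × ℤ)) : Set (ℤ × ℤ) := (fun p => (p.1 + d, p.2)) '' A

/-- Shift the second entry of every point of `A` by `d` (well defined on arcs). -/
def shiftSnd (d : ℤ) (A : Set (ℤ × ℤ)) : Set (ℤ × ℤ) := (fun p => (p.1, p.2 + d)) '' A

/-- The bridging arc `π[x_∂, y_∂']` of the annulus `P_{g,h}`, from the outer boundary `∂`
to the inner boundary `∂'`: the orbit of `(x, y) ∈ ℤ × ℤ` under `σ·(x,y) = (x+g, y+h)`. -/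
def orbPP (g h x y : ℤ) : Set (ℤ × ℤ) := {q : ℤ × ℤ | ∃ k : ℤ, q = (x + k * g, y + k * h)}

/-- Elementary moves between bridging arcs from `∂` to `∂'`:
`π[x_∂, y_∂'] → π[(x-1)_∂, y_∂']` and `π[x_∂, y_∂'] → π[x_∂, (y+1)_∂']`. -/
def elemPP (A B : Set (ℤ × ℤ)) : Prop := B = shiftFst (-1) A ∨ B = shiftSnd 1 A

/-- A bridging arc from `∂` to `∂'` is preprojective if it can be reached from
`β_g = π[0_∂, 0_∂']` by a finite (possibly empty) sequence of elementary moves. -/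
def IsPreproj (g h : ℤ) (A : Set (ℤ × ℤ)) : Prop :=
  Relation.ReflTransGen elemPP (orbPP g h 0 0) A

/-- The preprojective arc `τ^{-r} β_i`: `π[(i-g-r)_∂, r_∂']` for `0 ≤ i ≤ g` and
`π[(-r)_∂, (i-g+r)_∂']` for `g < i ≤ n`. -/
def tauInvBetaArc (g h r i : ℤ) : Set (ℤ × ℤ) :=
  if i ≤ g then orbPP g h (i - g - r) r else orbPP g h (-r) (i - g + r)

open Classical in
/-- The number of elementary moves from the bridging arc `A` to the bridging arc `B`
(each arc from `∂` to `∂'` has exactly two elementary moves out of it, which may have the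
same target). -/
noncomputable def ppMoveCount (A B : Set (ℤ × ℤ)) : ℕ :=
  (if B = shiftFst (-1) A then 1 else 0) + (if B = shiftSnd 1 A then 1 else 0)

open Classical in
/-- The number of arrows from `v` to `w` in the quiver `Q^P` with vertex set
`ℕ × {0,…,n}` and arrows `(r, i+1) → (r, i)` and `(r, i) → (r+1, i+1)` for `0 ≤ i ≤ g-1`,
`(r, i) → (r, (i+1) % (n+1))` and `(r, (i+1) % (n+1)) → (r+1, i)` for `g ≤ i ≤ n`. -/
noncomputable def qpCount (g n : ℤ) (v w : ℤ × ℤ) : ℕ :=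
  (if v.1 = w.1 ∧ 0 ≤ v.1 ∧ v.2 = w.2 + 1 ∧ 0 ≤ w.2 ∧ w.2 ≤ g - 1 then 1 else 0) +
  (if w.1 = v.1 + 1 ∧ 0 ≤ v.1 ∧ w.2 = v.2 + 1 ∧ 0 ≤ v.2 ∧ v.2 ≤ g - 1 then 1 else 0) +
  (if v.1 = w.1 ∧ 0 ≤ v.1 ∧ g ≤ v.2 ∧ v.2 ≤ n ∧ w.2 = (v.2 + 1) % (n + 1) then 1 else 0) +
  (if w.1 = v.1 + 1 ∧ 0 ≤ v.1 ∧ g ≤ w.2 ∧ w.2 ≤ n ∧ v.2 = (w.2 + 1) % (n + 1) then 1 else 0)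

lemma orbPP_eq_iff (g h x y x' y' : ℤ) :
    orbPP g h x y = orbPP g h x' y' ↔ ∃ k : ℤ, x' = x + k * g ∧ y' = y + k * h := by
  constructor
  · intro hEq
    have hmem : ((x', y') : ℤ × ℤ) ∈ orbPP g h x' y' := ⟨0, by simp⟩
    rw [← hEq] at hmem
    obtain ⟨k, hk⟩ := hmem
    rw [Prod.mk.injEq] at hk
    exact ⟨k, hk.1, hk.2⟩
  · rintro ⟨k, rfl, rfl⟩
    ext q
    constructor
    · rintro ⟨m, rfl⟩
      exact ⟨m - k, by simp only [Prod.mk.injEq]; constructor <;> ring⟩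
    · rintro ⟨m, rfl⟩
      exact ⟨m + k, by simp only [Prod.mk.injEq]; constructor <;> ring⟩

lemma shiftFst_orbPP (d g h x y : ℤ) : shiftFst d (orbPP g h x y) = orbPP g h (x + d) y := by
  ext q
  simp only [shiftFst, orbPP, Set.mem_image, Set.mem_setOf_eq]
  constructor
  · rintro ⟨p, ⟨k, rfl⟩, rfl⟩
    exact ⟨k, by ext <;> simp <;> ring⟩
  · rintro ⟨k, rfl⟩
    exact ⟨(x + k * g, y + k * h), ⟨k, rfl⟩, by ext <;> simp <;> ring⟩

lemma shiftSnd_orbPP (d g h x y : ℤ) : shiftSnd d (orbPP g h x y) = orbPP g h x (y + d) := by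
  ext q
  simp only [shiftSnd, orbPP, Set.mem_image, Set.mem_setOf_eq]
  constructor
  · rintro ⟨p, ⟨k, rfl⟩, rfl⟩
    exact ⟨k, by ext <;> simp <;> ring⟩
  · rintro ⟨k, rfl⟩
    exact ⟨(x + k * g, y + k * h), ⟨k, rfl⟩, by ext <;> simp <;> ring⟩

lemma k01 {k m t : ℤ} (hm : 2 ≤ m) (heq : k * m = t) (h1 : 2 - m ≤ t) (h2 : t ≤ m) :
    k = 0 ∨ k = 1 := by
  rcases le_or_gt k (-1) with hk | hk
  · exfalso; nlinarith
  rcases le_or_gt 2 k with hk2 | hk2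
  · exfalso; nlinarith
  · omega

lemma k0neg {k m t : ℤ} (hm : 2 ≤ m) (heq : k * m = t) (h1 : -m ≤ t) (h2 : t ≤ m - 2) :
    k = 0 ∨ k = -1 := by
  rcases le_or_gt k (-2) with hk | hk
  · exfalso; nlinarith
  rcases le_or_gt 1 k with hk2 | hk2
  · exfalso; nlinarith
  · omega

lemma kzero {k m t : ℤ} (hm : 1 ≤ m) (heq : k * m = t) (h1 : 1 - m ≤ t) (h2 : t ≤ m - 1) :
    k = 0 := by
  rcases le_or_gt k (-1) with hk | hk
  · exfalso; nlinarith
  rcases le_or_gt 1 k with hk2 | hk2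
  · exfalso; nlinarith
  · omega

lemma step1 {g h x y : ℤ} (H : IsPreproj g h (orbPP g h x y)) :
    IsPreproj g h (orbPP g h (x - 1) y) :=
  H.tail (Or.inl (by rw [shiftFst_orbPP]; ring_nf))

lemma step2 {g h x y : ℤ} (H : IsPreproj g h (orbPP g h x y)) :
    IsPreproj g h (orbPP g h x (y + 1)) :=
  H.tail (Or.inr (by rw [shiftSnd_orbPP]))

lemma preproj_of (g h : ℤ) (a b : ℤ) (ha : 0 ≤ a) (hb : 0 ≤ b) :
    IsPreproj g h (orbPP g h (-a) b) := by
  have H0 : ∀ b : ℤ, 0 ≤ b → IsPreproj g h (orbPP g h 0 b) := by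
    refine Int.le_induction ?_ ?_
    · exact Relation.ReflTransGen.refl
    · intro n _ ih; exact step2 ih
  have H1 : ∀ a : ℤ, 0 ≤ a → IsPreproj g h (orbPP g h (-a) b) := by
    refine Int.le_induction ?_ ?_
    · simpa using H0 b hb
    · intro n _ ih
      have := step1 ih
      simpa [show -n - 1 = -(n + 1) by ring] using this
  exact H1 a ha

lemma preproj_dest (g h : ℤ) (A : Set (ℤ × ℤ)) (H : IsPreproj g h A) :
    ∃ a b : ℤ, 0 ≤ a ∧ 0 ≤ b ∧ A = orbPP g h (-a) b := by
  induction H with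
  | refl => exact ⟨0, 0, le_refl _, le_refl _, by norm_num⟩
  | tail _ hstep ih =>
      obtain ⟨a, b, ha, hb, rfl⟩ := ih
      rcases hstep with hs | hs
      · exact ⟨a + 1, b, by omega, hb, by rw [hs, shiftFst_orbPP]; ring_nf⟩
      · exact ⟨a, b + 1, ha, by omega, by rw [hs, shiftSnd_orbPP]⟩
lemma M1_iff (g h n r i r' i' : ℤ) (hh : 1 ≤ h) (hgh : h ≤ g) (hn : n = g + h - 1)
    (hr : 0 ≤ r) (hi0 : 0 ≤ i) (hin : i ≤ n) (hr' : 0 ≤ r') (hi0' : 0 ≤ i') (hin' : i' ≤ n) :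
    tauInvBetaArc g h r' i' = shiftFst (-1) (tauInvBetaArc g h r i) ↔
      ((r' = r ∧ i' = i - 1 ∧ 1 ≤ i ∧ i ≤ g) ∨ (r' = r + 1 ∧ i' = i - 1 ∧ g < i) ∨
        (r' = r + 1 ∧ i = 0 ∧ i' = n)) := by
  rw [tauInvBetaArc, tauInvBetaArc]
  rcases le_or_gt i g with hig | hig <;> rcases le_or_gt i' g with hig' | hig' <;>
    [rw [if_pos hig', if_pos hig];
     rw [if_neg (not_le.mpr hig'), if_pos hig];
     rw [if_pos hig', if_neg (not_le.mpr hig)];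
     rw [if_neg (not_le.mpr hig'), if_neg (not_le.mpr hig)]] <;>
  · rw [shiftFst_orbPP, orbPP_eq_iff]
    constructor
    · rintro ⟨k, hx, hy⟩
      have hk : k * (g + h) = i - i' - 1 := by linear_combination -hx - hy
      rcases k0neg (by omega) hk (by omega) (by omega) with rfl | rfl
      · omega
      · omega
    · rintro (⟨rfl, rfl, h1, h2⟩ | ⟨rfl, rfl, h1⟩ | ⟨rfl, rfl, rfl⟩) <;>
        first
          | exact ⟨0, by omega, by omega⟩
          | exact ⟨-1, by omega, by omega⟩
lemma M2_iff (g h n r i r' i' : ℤ) (hh : 1 ≤ h) (hgh : h ≤ g) (hn : n = g + h - 1)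
    (hr : 0 ≤ r) (hi0 : 0 ≤ i) (hin : i ≤ n) (hr' : 0 ≤ r') (hi0' : 0 ≤ i') (hin' : i' ≤ n) :
    tauInvBetaArc g h r' i' = shiftSnd 1 (tauInvBetaArc g h r i) ↔
      ((r' = r + 1 ∧ i' = i + 1 ∧ i ≤ g - 1) ∨ (r' = r ∧ i' = i + 1 ∧ g ≤ i) ∨
        (r' = r ∧ i = n ∧ i' = 0)) := by
  rw [tauInvBetaArc, tauInvBetaArc]
  rcases le_or_gt i g with hig | hig <;> rcases le_or_gt i' g with hig' | hig' <;>
    [rw [if_pos hig', if_pos hig];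
     rw [if_neg (not_le.mpr hig'), if_pos hig];
     rw [if_pos hig', if_neg (not_le.mpr hig)];
     rw [if_neg (not_le.mpr hig'), if_neg (not_le.mpr hig)]] <;>
  · rw [shiftSnd_orbPP, orbPP_eq_iff]
    constructor
    · rintro ⟨k, hx, hy⟩
      have hk : k * (g + h) = i - i' + 1 := by linear_combination -hx - hy
      rcases k01 (by omega) hk (by omega) (by omega) with rfl | rfl
      · omega
      · omega
    · rintro (⟨rfl, rfl, h1⟩ | ⟨rfl, rfl, h1⟩ | ⟨rfl, rfl, rfl⟩) <;>
        first
          | exact ⟨0, by omega, by omega⟩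
          | exact ⟨1, by omega, by omega⟩
lemma rn1 {g h k a b t : ℤ} (hg : 1 ≤ g) (hh : 1 ≤ h) (ha : 0 ≤ a) (hb : 0 ≤ b)
    (hdef : k * g + k * h + t = b - a + g) (ht : 0 ≤ t) : 0 ≤ b - k * h := by
  rcases le_or_gt k 0 with hk | hk
  · nlinarith [mul_nonneg (neg_nonneg.mpr hk) (by linarith : (0:ℤ) ≤ h)]
  · have h1 : g ≤ k * g := le_mul_of_one_le_left (by linarith) hk
    linarith

lemma rn2 {g h k a b t : ℤ} (hg : 1 ≤ g) (hh : 1 ≤ h) (ha : 0 ≤ a) (hb : 0 ≤ b)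
    (hdef : k * g + k * h + t = b - a + g) (ht : t ≤ g + h - 1) : 0 ≤ a + k * g := by
  rcases le_or_gt 0 k with hk | hk
  · nlinarith [mul_nonneg hk (by linarith : (0:ℤ) ≤ g)]
  · have hk1 : k ≤ -1 := by omega
    nlinarith [mul_nonneg (by linarith : (0:ℤ) ≤ -(k+1)) (by linarith : (0:ℤ) ≤ h)]

lemma mod_succ_eq {i n : ℤ} (h0 : 0 ≤ i) (h1 : i ≤ n) :
    (i + 1) % (n + 1) = if i = n then 0 else i + 1 := by
  split_ifs with hin
  · subst hin; exact Int.emod_self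
  · exact Int.emod_eq_of_lt (by omega) (by omega)

/-- the map `F(τ^{-r} β_i) = (r, i)` is a well-defined bijection from the
preprojective arcs of `P_{g,h}` onto `ℕ × {0,…,n}`, and for any two preprojective arcs
`α`, `α'` the elementary moves from `α` to `α'` are in bijection with the arrows from
`F(α)` to `F(α')` in `Q^P`.  Equivalently, the inverse parametrization
`(r, i) ↦ τ^{-r} β_i` is a bijection from `{(r,i) : r ≥ 0, 0 ≤ i ≤ n}` onto the set of
preprojective arcs which matches the number of arrows between any two vertices. -/
theorem preprojective_quiver_iso (g h n : ℤ) (hh : 1 ≤ h) (hgh : h ≤ g)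
    (hn : n = g + h - 1) :
    Set.BijOn (fun p : ℤ × ℤ => tauInvBetaArc g h p.1 p.2)
      {p : ℤ × ℤ | 0 ≤ p.1 ∧ 0 ≤ p.2 ∧ p.2 ≤ n} {A | IsPreproj g h A} ∧
    (∀ p ∈ {p : ℤ × ℤ | 0 ≤ p.1 ∧ 0 ≤ p.2 ∧ p.2 ≤ n},
     ∀ q ∈ {p : ℤ × ℤ | 0 ≤ p.1 ∧ 0 ≤ p.2 ∧ p.2 ≤ n},
      ppMoveCount (tauInvBetaArc g h p.1 p.2) (tauInvBetaArc g h q.1 q.2)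
        = qpCount g n p q) := by
  have hg : 1 ≤ g := le_trans hh hgh
  constructor
  · refine ⟨?_, ?_, ?_⟩
    · -- MapsTo
      rintro ⟨r, i⟩ ⟨hr, hi0, hin⟩
      simp only [Set.mem_setOf_eq]
      rcases le_or_gt i g with hig | hig
      · have H := preproj_of g h (g + r - i) r (by omega) hr
        have e : -(g + r - i) = i - g - r := by ring
        rw [e] at H
        simpa [tauInvBetaArc, if_pos hig] using H
      · have H := preproj_of g h r (i - g + r) hr (by omega)
        simpa [tauInvBetaArc, if_neg (not_le.mpr hig)] using H
    · -- InjOn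
      rintro ⟨r, i⟩ ⟨hr, hi0, hin⟩ ⟨s, j⟩ ⟨hs, hj0, hjn⟩ heq
      simp only at heq
      have key : r = s ∧ i = j := by
        rw [tauInvBetaArc, tauInvBetaArc] at heq
        rcases le_or_gt i g with hig | hig <;> rcases le_or_gt j g with hjg | hjg <;>
          [rw [if_pos hig, if_pos hjg] at heq;
           rw [if_pos hig, if_neg (not_le.mpr hjg)] at heq;
           rw [if_neg (not_le.mpr hig), if_pos hjg] at heq;
           rw [if_neg (not_le.mpr hig), if_neg (not_le.mpr hjg)] at heq] <;>
        · rw [orbPP_eq_iff] at heq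
          obtain ⟨k, hx, hy⟩ := heq
          have hk : k * (g + h) = j - i := by linear_combination -hx - hy
          have hk0 := kzero (m := g + h) (by omega) hk (by omega) (by omega)
          subst hk0
          constructor <;> omega
      simp only [Prod.mk.injEq]
      exact key
    · -- SurjOn
      rintro A hA
      obtain ⟨a, b, ha, hb, rfl⟩ := preproj_dest g h A hA
      have hm2 : 0 < g + h := by omega
      set t := (b - a + g) % (g + h) with htdef
      set k := (b - a + g) / (g + h) with hkdef
      have hde : (g + h) * k + t = b - a + g := Int.mul_ediv_add_emod _ _
      have ht0 : 0 ≤ t := Int.emod_nonneg _ (by omega)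
      have ht1 : t < g + h := Int.emod_lt_of_pos _ hm2
      have hde' : k * g + k * h + t = b - a + g := by linear_combination hde
      rcases le_or_gt t g with htg | htg
      · refine ⟨(b - k * h, t), ⟨rn1 hg hh ha hb hde' ht0, ht0, by omega⟩, ?_⟩
        show tauInvBetaArc g h (b - k * h) t = orbPP g h (-a) b
        rw [tauInvBetaArc, if_pos htg, orbPP_eq_iff]
        exact ⟨k, by linear_combination -hde', by ring⟩
      · refine ⟨(a + k * g, t), ⟨rn2 hg hh ha hb hde' (by omega), ht0, by omega⟩, ?_⟩
        show tauInvBetaArc g h (a + k * g) t = orbPP g h (-a) b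
        rw [tauInvBetaArc, if_neg (not_le.mpr htg), orbPP_eq_iff]
        exact ⟨k, by ring, by linear_combination -hde'⟩
  · -- counts
    rintro ⟨r, i⟩ ⟨hr, hi0, hin⟩ ⟨s, j⟩ ⟨hs, hj0, hjn⟩
    simp only at hr hi0 hin hs hj0 hjn ⊢
    have hu0 : ∃ u : ℤ, (i + 1) % (n + 1) = u ∧ ((i < n ∧ u = i + 1) ∨ (i = n ∧ u = 0)) := by
      refine ⟨_, rfl, ?_⟩
      rcases eq_or_lt_of_le hin with he | hlt
      · right; exact ⟨he, by rw [he]; exact Int.emod_self⟩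
      · exact Or.inl ⟨hlt, Int.emod_eq_of_lt (by omega) (by omega)⟩
    have hv0 : ∃ v : ℤ, (j + 1) % (n + 1) = v ∧ ((j < n ∧ v = j + 1) ∨ (j = n ∧ v = 0)) := by
      refine ⟨_, rfl, ?_⟩
      rcases eq_or_lt_of_le hjn with he | hlt
      · right; exact ⟨he, by rw [he]; exact Int.emod_self⟩
      · exact Or.inl ⟨hlt, Int.emod_eq_of_lt (by omega) (by omega)⟩
    obtain ⟨u, hueq, hu⟩ := hu0
    obtain ⟨v, hveq, hv⟩ := hv0
    simp only [ppMoveCount, qpCount,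
      M1_iff g h n r i s j hh hgh hn hr hi0 hin hs hj0 hjn,
      M2_iff g h n r i s j hh hgh hn hr hi0 hin hs hj0 hjn, hueq, hveq]
    have e1 : (if (s = r ∧ j = i - 1 ∧ 1 ≤ i ∧ i ≤ g) ∨ (s = r + 1 ∧ j = i - 1 ∧ g < i) ∨
          (s = r + 1 ∧ i = 0 ∧ j = n) then (1:ℕ) else 0)
        = (if r = s ∧ 0 ≤ r ∧ i = j + 1 ∧ 0 ≤ j ∧ j ≤ g - 1 then (1:ℕ) else 0)
          + (if s = r + 1 ∧ 0 ≤ r ∧ g ≤ j ∧ j ≤ n ∧ i = v then (1:ℕ) else 0) := by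
      rcases Classical.em (r = s ∧ 0 ≤ r ∧ i = j + 1 ∧ 0 ≤ j ∧ j ≤ g - 1) with h1 | h1
      · rw [if_pos h1, if_pos (by omega), if_neg (by omega)]
      · rcases Classical.em (s = r + 1 ∧ 0 ≤ r ∧ g ≤ j ∧ j ≤ n ∧ i = v) with h4 | h4
        · rw [if_neg h1, if_pos h4, if_pos (by omega)]
        · rw [if_neg h1, if_neg h4, if_neg (by omega)]
    have e2 : (if (s = r + 1 ∧ j = i + 1 ∧ i ≤ g - 1) ∨ (s = r ∧ j = i + 1 ∧ g ≤ i) ∨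
          (s = r ∧ i = n ∧ j = 0) then (1:ℕ) else 0)
        = (if s = r + 1 ∧ 0 ≤ r ∧ j = i + 1 ∧ 0 ≤ i ∧ i ≤ g - 1 then (1:ℕ) else 0)
          + (if r = s ∧ 0 ≤ r ∧ g ≤ i ∧ i ≤ n ∧ j = u then (1:ℕ) else 0) := by
      rcases Classical.em (s = r + 1 ∧ 0 ≤ r ∧ j = i + 1 ∧ 0 ≤ i ∧ i ≤ g - 1) with h2 | h2
      · rw [if_pos h2, if_pos (by omega), if_neg (by omega)]
      · rcases Classical.em (r = s ∧ 0 ≤ r ∧ g ≤ i ∧ i ≤ n ∧ j = u) with h3 | h3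
        · rw [if_neg h2, if_pos h3, if_pos (by omega)]
        · rw [if_neg h2, if_neg h3, if_neg (by omega)]
    rw [e1, e2]
    ring
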